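/- Let b : ℝ → ℝ be a continuous 1-periodic function with ∫₀¹ b(s) ds = -α < 0. Let β ∈ (0, α), L > 0, and D > 0. Then the function Δ(t) = D·L·(∫_t^{t+1} exp(∫_s^{t+1} (b(x)+β) dx) ds) / (1 - exp(β-α)) is a 1-periodic, strictly positive solution of the ODE Δ'(t) = (b(t)+β)Δ(t) + D·L. Moreover, there exists D₀ > 0 such that for all D < D₀, max_{t∈[0,1]} Δ(t) < 1. -/

import Mathlib

open Real MeasureTheory intervalIntegral

/-- The candidate periodic solution of `Δ' = (b+β)Δ + D·L`. -/
noncomputable def DeltaSol (b : ℝ → ℝ) (α β L D : ℝ) (t : ℝ) : ℝ :=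
  D * L * (∫ s in t..(t + 1), Real.exp (∫ x in s..(t + 1), (b x + β))) /
    (1 - Real.exp (β - α))

theorem stmt_0 (b : ℝ → ℝ) (hb : Continuous b) (hper : ∀ t, b (t + 1) = b t)
    (α : ℝ) (hα : 0 < α) (hint : (∫ s in (0:ℝ)..1, b s) = -α)
    (β L : ℝ) (hβ : β ∈ Set.Ioo 0 α) (hL : 0 < L) :
    (∀ D : ℝ, 0 < D → ∀ t : ℝ,
        DeltaSol b α β L D (t + 1) = DeltaSol b α β L D t ∧
        0 < DeltaSol b α β L D t ∧
        HasDerivAt (DeltaSol b α β L D) ((b t + β) * DeltaSol b α β L D t + D * L) t) ∧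
    ∃ D₀ > (0:ℝ), ∀ D : ℝ, 0 < D → D < D₀ →
      ∀ t ∈ Set.Icc (0:ℝ) 1, DeltaSol b α β L D t < 1 := by
  obtain ⟨hβ0, hβα⟩ := hβ
  set c : ℝ := 1 - Real.exp (β - α) with hc_def
  have hc : 0 < c := by
    have : Real.exp (β - α) < 1 := Real.exp_lt_one_iff.2 (by linarith)
    simpa [hc_def] using sub_pos.2 this
  have hf : Continuous (fun x => b x + β) := hb.add continuous_const
  set B : ℝ → ℝ := fun u => ∫ x in (0:ℝ)..u, (b x + β) with hB_def
  have hB : ∀ u, HasDerivAt B (b u + β) u := fun u =>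
    intervalIntegral.integral_hasDerivAt_right (hf.intervalIntegrable 0 u)
      (hf.stronglyMeasurableAtFilter _ _) hf.continuousAt
  have hBcont : Continuous B := continuous_iff_continuousAt.2 fun u => (hB u).continuousAt
  have hBsub : ∀ s u : ℝ, (∫ x in s..u, (b x + β)) = B u - B s := fun s u =>
    (integral_interval_sub_left (hf.intervalIntegrable 0 u) (hf.intervalIntegrable 0 s)).symm
  have hg : Continuous (fun s => Real.exp (-(B s))) := Real.continuous_exp.comp hBcont.neg
  set G : ℝ → ℝ := fun u => ∫ s in (0:ℝ)..u, Real.exp (-(B s)) with hG_def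
  have hG : ∀ u, HasDerivAt G (Real.exp (-(B u))) u := fun u =>
    intervalIntegral.integral_hasDerivAt_right (hg.intervalIntegrable 0 u)
      (hg.stronglyMeasurableAtFilter _ _) hg.continuousAt
  set F : ℝ → ℝ := fun t => ∫ s in t..(t + 1), Real.exp (∫ x in s..(t + 1), (b x + β)) with hF_def
  have hFeq : ∀ t, F t = Real.exp (B (t + 1)) * (G (t + 1) - G t) := by
    intro t
    have h1 : ∀ s : ℝ, Real.exp (∫ x in s..(t + 1), (b x + β))
        = Real.exp (B (t + 1)) * Real.exp (-(B s)) := by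
      intro s; rw [hBsub, sub_eq_add_neg, Real.exp_add]
    calc F t = ∫ s in t..(t + 1), Real.exp (B (t + 1)) * Real.exp (-(B s)) := by
            simp only [hF_def]; exact intervalIntegral.integral_congr fun s _ => h1 s
      _ = Real.exp (B (t + 1)) * ∫ s in t..(t + 1), Real.exp (-(B s)) := by
            rw [intervalIntegral.integral_const_mul]
      _ = Real.exp (B (t + 1)) * (G (t + 1) - G t) := by
            rw [integral_interval_sub_left (hg.intervalIntegrable 0 (t+1))
              (hg.intervalIntegrable 0 t)]
  have hperf : Function.Periodic (fun x => b x + β) 1 := fun x => by simp [hper x]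
  have hBshift : ∀ t : ℝ, B (t + 1) - B t = β - α := by
    intro t
    rw [← hBsub t (t + 1), hperf.intervalIntegral_add_eq t 0]
    simp only [zero_add]
    rw [intervalIntegral.integral_add (hb.intervalIntegrable 0 1)
      (intervalIntegrable_const), hint]
    simp; ring
  have hFpos : ∀ t, 0 < F t := by
    intro t
    rw [hFeq]
    refine mul_pos (Real.exp_pos _) ?_
    have heq : G (t + 1) - G t = ∫ s in t..(t + 1), Real.exp (-(B s)) :=
      integral_interval_sub_left (hg.intervalIntegrable 0 (t+1)) (hg.intervalIntegrable 0 t)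
    rw [heq]
    exact intervalIntegral.intervalIntegral_pos_of_pos
      (hg.intervalIntegrable t (t+1)) (fun x => Real.exp_pos _) (by linarith)
  have hDel : ∀ D : ℝ, DeltaSol b α β L D = fun t => D * L * F t / c := by
    intro D; rfl
  have hFper : ∀ t, F (t + 1) = F t := by
    intro t
    have key : ∀ s : ℝ, (∫ x in (s + 1)..(t + 1 + 1), (b x + β)) = ∫ x in s..(t + 1), (b x + β) := by
      intro s
      rw [← integral_comp_add_right (fun x => b x + β) 1]
      simp only [hper]
    have h2 := integral_comp_add_right
      (fun s => Real.exp (∫ x in s..(t + 1 + 1), (b x + β))) 1 (a := t) (b := t + 1)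
    simp only [hF_def]
    rw [← h2]
    exact intervalIntegral.integral_congr fun s _ => by rw [key]
  have hFderiv : ∀ t, HasDerivAt F ((b t + β) * F t + c) t := by
    intro t
    have h1 : HasDerivAt (fun u : ℝ => Real.exp (B (u + 1)))
        ((b (t + 1) + β) * Real.exp (B (t + 1))) t := by
      have := ((hB (t + 1)).comp t ((hasDerivAt_id t).add_const 1)).exp
      simpa [mul_comm] using this
    have h2 : HasDerivAt (fun u : ℝ => G (u + 1) - G u)
        (Real.exp (-(B (t + 1))) - Real.exp (-(B t))) t := by
      have ha := (hG (t + 1)).comp t ((hasDerivAt_id t).add_const 1)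
      have h := ha.sub (hG t)
      simp only [mul_one] at h
      exact h
    have h3 := h1.mul h2
    have hFfun : F = fun u => Real.exp (B (u + 1)) * (G (u + 1) - G u) := funext hFeq
    have h4 : HasDerivAt F ((b (t + 1) + β) * Real.exp (B (t + 1)) * (G (t + 1) - G t)
        + Real.exp (B (t + 1)) * (Real.exp (-(B (t + 1))) - Real.exp (-(B t)))) t := by
      rw [hFfun]; exact h3
    have e1 : Real.exp (B (t + 1)) * Real.exp (-(B (t + 1))) = 1 := by
      rw [← Real.exp_add]; simp
    have e2 : Real.exp (B (t + 1)) * Real.exp (-(B t)) = Real.exp (β - α) := by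
      rw [← Real.exp_add, ← hBshift t]; ring_nf
    have hval : (b t + β) * F t + c
        = (b (t + 1) + β) * Real.exp (B (t + 1)) * (G (t + 1) - G t)
          + Real.exp (B (t + 1)) * (Real.exp (-(B (t + 1))) - Real.exp (-(B t))) := by
      rw [hper t, hFeq t, hc_def]
      nlinarith [e1, e2]
    rw [hval]
    exact h4
  constructor
  · intro D hD t
    refine ⟨by rw [hDel]; simp only [hFper], ?_, ?_⟩
    · rw [hDel]
      exact div_pos (mul_pos (mul_pos hD hL) (hFpos t)) hc
    · rw [hDel]
      have h := (((hFderiv t).const_mul (D * L)).div_const c)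
      refine h.congr_deriv ?_
      beta_reduce
      field_simp
  · -- boundedness
    obtain ⟨M, hM⟩ := (isCompact_Icc (a := (0:ℝ)) (b := 1)).exists_bound_of_continuousOn
      hb.continuousOn
    set M' : ℝ := max M 0 with hM'_def
    have hM'0 : 0 ≤ M' := le_max_right _ _
    have hbnd : ∀ x : ℝ, |b x| ≤ M' := by
      intro x
      have hfr : Int.fract x ∈ Set.Icc (0:ℝ) 1 :=
        ⟨Int.fract_nonneg x, le_of_lt (Int.fract_lt_one x)⟩
      have hbx : b (Int.fract x) = b x := by
        have hper1 : Function.Periodic b 1 := hper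
        have := hper1.sub_int_mul_eq (x := x) ⌊x⌋
        rw [mul_one, Int.self_sub_floor] at this
        exact this
      calc |b x| = ‖b (Int.fract x)‖ := by rw [hbx]; rfl
        _ ≤ M := hM _ hfr
        _ ≤ M' := le_max_left _ _
    have hFbnd : ∀ t : ℝ, F t ≤ Real.exp (M' + β) := by
      intro t
      have hinner : ∀ s ∈ Set.Icc t (t + 1),
          Real.exp (∫ x in s..(t + 1), (b x + β)) ≤ Real.exp (M' + β) := by
        intro s hs
        apply Real.exp_le_exp.2
        calc (∫ x in s..(t + 1), (b x + β)) ≤ ∫ x in s..(t + 1), (M' + β) := by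
              apply intervalIntegral.integral_mono_on hs.2
                (hf.intervalIntegrable _ _) intervalIntegrable_const
              intro x _
              have := (abs_le.1 (hbnd x)).2
              linarith
          _ = (M' + β) * (t + 1 - s) := by simp [smul_eq_mul]; ring
          _ ≤ (M' + β) * 1 := by
              apply mul_le_mul_of_nonneg_left _ (by linarith)
              linarith [hs.1]
          _ = M' + β := mul_one _
      calc F t ≤ ∫ s in t..(t + 1), Real.exp (M' + β) := by
            apply intervalIntegral.integral_mono_on (by linarith)
            · exact (Real.continuous_exp.comp (by
                have : Continuous (fun s => B (t+1) - B s) := continuous_const.sub hBcont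
                exact this.congr fun s => by rw [hBsub])).intervalIntegrable _ _
            · exact intervalIntegrable_const
            · exact hinner
        _ = Real.exp (M' + β) := by simp
    refine ⟨c / (L * Real.exp (M' + β)), div_pos hc (mul_pos hL (Real.exp_pos _)), ?_⟩
    intro D hD hDlt t _
    rw [hDel]
    rw [div_lt_one hc]
    calc D * L * F t ≤ D * L * Real.exp (M' + β) :=
          mul_le_mul_of_nonneg_left (hFbnd t) (by positivity)
      _ < (c / (L * Real.exp (M' + β))) * L * Real.exp (M' + β) := by
          apply mul_lt_mul_of_pos_right _ (Real.exp_pos _)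
          exact mul_lt_mul_of_pos_right hDlt hL
      _ = c := by field_simp
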